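/- Let (E, ω) be a finite-dimensional symplectic k-vector space, i.e., ω is a nondegenerate skew-symmetric k-bilinear form on E. Then the pairing {·,·}_ω : TE × TE → TE maps [TE,TE] × TE and TE × [TE,TE] into [TE,TE], and the induced bracket makes the quotient TE/[TE,TE] into a Lie algebra over k (bilinear, alternating, Jacobi identity). (Theorem 2.2 of the paper specialized to the free algebra A = TE over B = k equipped with its canonical symplectic 2-form.) -/

import Mathlib

/- STATEMENT 1: For a finite-dimensional symplectic k-vector space (E, ω) (k a field of
characteristic zero), the pairing {·,·}_ω on the tensor algebra TE maps [TE,TE] × TE and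
TE × [TE,TE] into [TE,TE], and the induced bracket makes TE/[TE,TE] a Lie algebra
(bilinear, alternating, Jacobi identity). -/

noncomputable section

open scoped BigOperators

/-- The product `u_1 ⊗ ⋯ ⊗ u_p` in the tensor algebra associated to a list of vectors. -/
def wordProd (k : Type*) [Field k] {E : Type*} [AddCommGroup E] [Module k E]
    (w : List E) : TensorAlgebra k E :=
  (w.map fun e => TensorAlgebra.ι k e).prod

/-- The list obtained from `w` by deleting the entry at position `i` and cyclically rotating
so that the entries after position `i` come first. -/
def rotAt {E : Type*} (w : List E) (i : ℕ) : List E :=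
  w.drop (i + 1) ++ w.take i

/-- `[TE,TE]`: the k-linear span of all commutators in the tensor algebra. -/
def commSpan (k E : Type*) [Field k] [AddCommGroup E] [Module k E] :
    Submodule k (TensorAlgebra k E) :=
  Submodule.span k {z | ∃ a b : TensorAlgebra k E, z = a * b - b * a}

/-- The value of the pairing `{·,·}_ω` on a pair of homogeneous tensors
`u_1 ⊗ ⋯ ⊗ u_p`, `v_1 ⊗ ⋯ ⊗ v_q`:
`Σ_{i,j} ω(u_i, v_j) • u_{i+1}⊗⋯⊗u_p⊗u_1⊗⋯⊗u_{i−1} ⊗ v_{j+1}⊗⋯⊗v_q⊗v_1⊗⋯⊗v_{j−1}`. -/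
def wordBracket {k : Type*} [Field k] {E : Type*} [AddCommGroup E] [Module k E]
    (ω : E →ₗ[k] E →ₗ[k] k) (u v : List E) : TensorAlgebra k E :=
  ∑ i : Fin u.length, ∑ j : Fin v.length,
    ω (u.get i) (v.get j) • wordProd k (rotAt u i ++ rotAt v j)

section Aux

set_option linter.unusedSectionVars false

variable {k : Type*} [Field k] {E : Type*} [AddCommGroup E] [Module k E]

lemma wordProd_append (a b : List E) :
    wordProd k (a ++ b) = wordProd k a * wordProd k b := by
  simp [wordProd]

lemma comm_mem (a b : TensorAlgebra k E) : a * b - b * a ∈ commSpan k E :=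
  Submodule.subset_span ⟨a, b, rfl⟩

lemma wordProd_comm_mem (a b : List E) :
    wordProd k (a ++ b) - wordProd k (b ++ a) ∈ commSpan k E := by
  rw [wordProd_append, wordProd_append]; exact comm_mem _ _

lemma span_words :
    Submodule.span k (Set.range (wordProd k : List E → TensorAlgebra k E)) = ⊤ := by
  rw [eq_top_iff]
  rintro x -
  induction x using TensorAlgebra.induction with
  | algebraMap r =>
      have : (algebraMap k (TensorAlgebra k E)) r = r • wordProd k ([] : List E) := by
        simp [wordProd, Algebra.smul_def]
      rw [this]
      exact Submodule.smul_mem _ _ (Submodule.subset_span ⟨[], rfl⟩)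
  | ι e =>
      have : TensorAlgebra.ι k e = wordProd k [e] := by simp [wordProd]
      rw [this]; exact Submodule.subset_span ⟨[e], rfl⟩
  | add x y hx hy => exact Submodule.add_mem _ hx hy
  | mul x y hx hy =>
      refine Submodule.span_induction
        (p := fun x _ => x * y ∈ Submodule.span k (Set.range (wordProd k : List E → TensorAlgebra k E)))
        ?_ ?_ ?_ ?_ hx
      · rintro _ ⟨u, rfl⟩
        refine Submodule.span_induction
          (p := fun y _ => wordProd k u * y ∈ Submodule.span k (Set.range (wordProd k : List E → TensorAlgebra k E)))
          ?_ ?_ ?_ ?_ hy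
        · rintro _ ⟨v, rfl⟩
          exact Submodule.subset_span ⟨u ++ v, wordProd_append u v⟩
        · simp
        · intro a b _ _ ha hb; rw [mul_add]; exact Submodule.add_mem _ ha hb
        · intro c a _ ha; rw [mul_smul_comm]; exact Submodule.smul_mem _ _ ha
      · simp
      · intro a b _ _ ha hb; rw [add_mul]; exact Submodule.add_mem _ ha hb
      · intro c a _ ha; rw [smul_mul_assoc]; exact Submodule.smul_mem _ _ ha

lemma mem_commSpan_of_words (L : TensorAlgebra k E →ₗ[k] TensorAlgebra k E)
    (h : ∀ u : List E, L (wordProd k u) ∈ commSpan k E) (f : TensorAlgebra k E) :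
    L f ∈ commSpan k E := by
  have : Submodule.span k (Set.range (wordProd k : List E → TensorAlgebra k E)) ≤
      Submodule.comap L (commSpan k E) := by
    rw [Submodule.span_le]; rintro _ ⟨u, rfl⟩; exact h u
  exact this (span_words (k := k) (E := E) ▸ Submodule.mem_top) 

lemma ext_words {N : Type*} [AddCommMonoid N] [Module k N]
    (L L' : TensorAlgebra k E →ₗ[k] N)
    (h : ∀ u : List E, L (wordProd k u) = L' (wordProd k u)) : L = L' := by
  refine LinearMap.ext_on (span_words (k := k) (E := E)) ?_
  rintro _ ⟨u, rfl⟩; exact h u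

lemma rotAt_length (w : List E) (i : ℕ) (hi : i < w.length) :
    (rotAt w i).length = w.length - 1 := by
  simp [rotAt]; omega

lemma getElem_rotAt_lt (w : List E) {i t : ℕ} (hi : i < w.length)
    (h : i + 1 + t < w.length) (ht : t < (rotAt w i).length) :
    (rotAt w i)[t] = w[i + 1 + t] := by
  have hd : (w.drop (i+1)).length = w.length - (i+1) := by simp
  simp only [rotAt]
  rw [List.getElem_append]
  rw [dif_pos (by omega)]
  rw [List.getElem_drop]

lemma getElem_rotAt_ge (w : List E) {i t : ℕ} (hi : i < w.length)
    (h : w.length ≤ i + 1 + t) (ht : t < (rotAt w i).length) :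
    (rotAt w i)[t] = w[i + 1 + t - w.length]'
      (by rw [rotAt_length w i hi] at ht; omega) := by
  have hd : (w.drop (i+1)).length = w.length - (i+1) := by simp
  have ht' : t < w.length - 1 := by rw [rotAt_length w i hi] at ht; exact ht
  simp only [rotAt]
  rw [List.getElem_append]
  rw [dif_neg (by omega)]
  rw [List.getElem_take]
  congr 1
  omega

lemma rot_drop_eq_take (v : List E) {j n j' : ℕ} (hj : j < v.length) (hn : n < v.length - 1)
    (hj' : j' < v.length) (hrel : j' = j + n + 1 ∨ j' + v.length = j + n + 1) :
    (rotAt v j').drop (v.length - 1 - n) = (rotAt v j).take n := by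
  have hq : 2 ≤ v.length := by omega
  apply List.ext_getElem
  · simp [rotAt_length _ _ hj, rotAt_length _ _ hj']; omega
  · intro t h1 h2
    have ht : t < n := by
      have := h2; simp [rotAt_length _ _ hj] at this; omega
    rw [List.getElem_drop, List.getElem_take]
    rcases hrel with hA | hB
    · rw [getElem_rotAt_ge v hj' (by omega), getElem_rotAt_lt v hj (by omega)]
      simp only [show j' + 1 + (v.length - 1 - n + t) - v.length = j + 1 + t from by omega]
    · rcases Nat.lt_or_ge (j + 1 + t) v.length with hB1 | hB2
      · rw [getElem_rotAt_lt v hj' (by omega), getElem_rotAt_lt v hj (by omega)]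
        simp only [show j' + 1 + (v.length - 1 - n + t) = j + 1 + t from by omega]
      · rw [getElem_rotAt_ge v hj' (by omega), getElem_rotAt_ge v hj (by omega)]
        simp only [show j' + 1 + (v.length - 1 - n + t) - v.length = j + 1 + t - v.length from by omega]

lemma rot_take_eq_drop (v : List E) {j n j' : ℕ} (hj : j < v.length) (hn : n < v.length - 1)
    (hj' : j' < v.length) (hrel : j' = j + n + 1 ∨ j' + v.length = j + n + 1) :
    (rotAt v j').take (v.length - 2 - n) = (rotAt v j).drop (n + 1) := by
  have hq : 2 ≤ v.length := by omega
  apply List.ext_getElem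
  · simp [rotAt_length _ _ hj, rotAt_length _ _ hj']; omega
  · intro t h1 h2
    have ht : t < v.length - 2 - n := by
      have := h1; simp [rotAt_length _ _ hj'] at this; omega
    rw [List.getElem_take, List.getElem_drop]
    rcases hrel with hA | hB
    · rcases Nat.lt_or_ge (j + n + 2 + t) v.length with hA1 | hA2
      · rw [getElem_rotAt_lt v hj' (by omega), getElem_rotAt_lt v hj (by omega)]
        simp only [show j' + 1 + t = j + 1 + (n + 1 + t) from by omega]
      · rw [getElem_rotAt_ge v hj' (by omega), getElem_rotAt_ge v hj (by omega)]
        simp only [show j' + 1 + t - v.length = j + 1 + (n + 1 + t) - v.length from by omega]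
    · rw [getElem_rotAt_lt v hj' (by omega), getElem_rotAt_ge v hj (by omega)]
      simp only [show j' + 1 + t = j + 1 + (n + 1 + t) - v.length from by omega]

lemma rotAt_append_left (u v : List E) {i : ℕ} (h : i < u.length) :
    rotAt (u ++ v) i = u.drop (i + 1) ++ v ++ u.take i := by
  unfold rotAt
  rw [List.drop_append, List.take_append,
    show i + 1 - u.length = 0 from by omega, show i - u.length = 0 from by omega]
  simp [List.append_assoc]

lemma rotAt_append_right (u v : List E) {i : ℕ} (h : i < v.length) :
    rotAt (u ++ v) (u.length + i) = v.drop (i + 1) ++ u ++ v.take i := by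
  unfold rotAt
  rw [List.drop_append, List.take_append,
    show u.length + i + 1 - u.length = i + 1 from by omega,
    show u.length + i - u.length = i from by omega,
    List.drop_eq_nil_of_le (by omega), List.take_of_length_le (by omega)]
  simp [List.append_assoc]

variable (ω : E →ₗ[k] E →ₗ[k] k)

lemma wordBracket_eq (u v : List E) :
    wordBracket ω u v = ∑ i ∈ Finset.range u.length, ∑ j ∈ Finset.range v.length,
      ω (u.getD i 0) (v.getD j 0) • wordProd k (rotAt u i ++ rotAt v j) := by
  unfold wordBracket
  rw [← Fin.sum_univ_eq_sum_range (fun i => ∑ j ∈ Finset.range v.length,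
      ω (u.getD i 0) (v.getD j 0) • wordProd k (rotAt u i ++ rotAt v j)) u.length]
  refine Finset.sum_congr rfl fun i _ => ?_
  rw [← Fin.sum_univ_eq_sum_range (fun j =>
      ω (u.getD (i : ℕ) 0) (v.getD j 0) • wordProd k (rotAt u i ++ rotAt v j)) v.length]
  refine Finset.sum_congr rfl fun j _ => ?_
  rw [List.get_eq_getElem, List.get_eq_getElem,
    List.getD_eq_getElem u 0 i.isLt, List.getD_eq_getElem v 0 j.isLt]

lemma key2 (hskew : ∀ x y : E, ω x y = - ω y x) (u v : List E) :
    wordBracket ω u v + wordBracket ω v u ∈ commSpan k E := by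
  rw [wordBracket_eq, wordBracket_eq, Finset.sum_comm (f := fun j i =>
      ω (v.getD j 0) (u.getD i 0) • wordProd k (rotAt v j ++ rotAt u i)),
    ← Finset.sum_add_distrib]
  refine Submodule.sum_mem _ fun i _ => ?_
  rw [← Finset.sum_add_distrib]
  refine Submodule.sum_mem _ fun j _ => ?_
  rw [hskew (v.getD j 0) (u.getD i 0), neg_smul, ← sub_eq_add_neg, ← smul_sub]
  exact Submodule.smul_mem _ _ (wordProd_comm_mem _ _)

lemma split_sum (w : List E) (a b : List E) :
    (∑ i ∈ Finset.range (a ++ b).length, ∑ j ∈ Finset.range w.length,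
      ω ((a ++ b).getD i 0) (w.getD j 0) • wordProd k (rotAt (a ++ b) i ++ rotAt w j)) =
      (∑ i ∈ Finset.range a.length, ∑ j ∈ Finset.range w.length,
        ω (a.getD i 0) (w.getD j 0) • wordProd k ((a.drop (i+1) ++ b ++ a.take i) ++ rotAt w j)) +
      (∑ i ∈ Finset.range b.length, ∑ j ∈ Finset.range w.length,
        ω (b.getD i 0) (w.getD j 0) • wordProd k ((b.drop (i+1) ++ a ++ b.take i) ++ rotAt w j)) := by
  rw [List.length_append,
    show Finset.range (a.length + b.length) = Finset.Ico 0 (a.length + b.length) from by rw [Finset.range_eq_Ico],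
    ← Finset.sum_Ico_consecutive _ (Nat.zero_le a.length) (Nat.le_add_right _ _)]
  congr 1
  · rw [show Finset.Ico 0 a.length = Finset.range a.length from by rw [Finset.range_eq_Ico]]
    refine Finset.sum_congr rfl fun i hi => ?_
    rw [Finset.mem_range] at hi
    rw [List.getD_append _ _ _ _ hi, rotAt_append_left _ _ hi]
  · rw [Finset.sum_Ico_eq_sum_range]
    simp only [Nat.add_sub_cancel_left]
    refine Finset.sum_congr rfl fun i hi => ?_
    rw [Finset.mem_range] at hi
    rw [List.getD_append_right _ _ _ _ (by omega), Nat.add_sub_cancel_left,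
      rotAt_append_right _ _ hi]

lemma key1 (u v w : List E) :
    wordBracket ω (u ++ v) w = wordBracket ω (v ++ u) w := by
  rw [wordBracket_eq, wordBracket_eq, split_sum, split_sum, add_comm]

lemma rot_getD (v : List E) {j n j' : ℕ} (hj : j < v.length) (hn : n < v.length - 1)
    (hj' : j' < v.length) (hrel : j' = j + n + 1 ∨ j' + v.length = j + n + 1) :
    (rotAt v j).getD n 0 = v.getD j' 0 := by
  rw [List.getD_eq_getElem _ _ (by rw [rotAt_length _ _ hj]; omega),
    List.getD_eq_getElem _ _ hj']
  rcases hrel with h | h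
  · rw [getElem_rotAt_lt v hj (by omega)]
    simp only [show j + 1 + n = j' from by omega]
  · rw [getElem_rotAt_ge v hj (by omega)]
    simp only [show j + 1 + n - v.length = j' from by omega]

lemma split_sum₂ (u a b : List E) :
    wordBracket ω u (a ++ b) =
      (∑ i ∈ Finset.range u.length, ∑ n ∈ Finset.range a.length,
        ω (u.getD i 0) (a.getD n 0) •
          wordProd k (rotAt u i ++ (a.drop (n+1) ++ b ++ a.take n))) +
      (∑ i ∈ Finset.range u.length, ∑ n ∈ Finset.range b.length,
        ω (u.getD i 0) (b.getD n 0) •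
          wordProd k (rotAt u i ++ (b.drop (n+1) ++ a ++ b.take n))) := by
  rw [wordBracket_eq, ← Finset.sum_add_distrib]
  refine Finset.sum_congr rfl fun i _ => ?_
  rw [List.length_append,
    show Finset.range (a.length + b.length) = Finset.Ico 0 (a.length + b.length) from by
      rw [Finset.range_eq_Ico],
    ← Finset.sum_Ico_consecutive _ (Nat.zero_le a.length) (Nat.le_add_right _ _)]
  congr 1
  · rw [show Finset.Ico 0 a.length = Finset.range a.length from by rw [Finset.range_eq_Ico]]
    refine Finset.sum_congr rfl fun n hn => ?_
    rw [Finset.mem_range] at hn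
    rw [List.getD_append _ _ _ _ hn, rotAt_append_left _ _ hn]
  · rw [Finset.sum_Ico_eq_sum_range]
    simp only [Nat.add_sub_cancel_left]
    refine Finset.sum_congr rfl fun n hn => ?_
    rw [Finset.mem_range] at hn
    rw [List.getD_append_right _ _ _ _ (by omega), Nat.add_sub_cancel_left,
      rotAt_append_right _ _ hn]

/-- the part of `{u, {v, w}}` where the outer word hits the first inner word `v`. -/
def S1 (u v w : List E) : TensorAlgebra k E :=
  ∑ x ∈ (Finset.range v.length ×ˢ Finset.range w.length) ×ˢ
      (Finset.range u.length ×ˢ Finset.range (v.length - 1)),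
    (ω (v.getD x.1.1 0) (w.getD x.1.2 0) *
        ω (u.getD x.2.1 0) ((rotAt v x.1.1).getD x.2.2 0)) •
      wordProd k (rotAt u x.2.1 ++
        ((rotAt v x.1.1).drop (x.2.2 + 1) ++ rotAt w x.1.2 ++ (rotAt v x.1.1).take x.2.2))

/-- the part of `{u, {v, w}}` where the outer word hits the second inner word `w`. -/
def S2 (u v w : List E) : TensorAlgebra k E :=
  ∑ x ∈ (Finset.range v.length ×ˢ Finset.range w.length) ×ˢ
      (Finset.range u.length ×ˢ Finset.range (w.length - 1)),
    (ω (v.getD x.1.1 0) (w.getD x.1.2 0) *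
        ω (u.getD x.2.1 0) ((rotAt w x.1.2).getD x.2.2 0)) •
      wordProd k (rotAt u x.2.1 ++
        ((rotAt w x.1.2).drop (x.2.2 + 1) ++ rotAt v x.1.1 ++ (rotAt w x.1.2).take x.2.2))

lemma T_eq (u v w : List E) :
    (∑ j ∈ Finset.range v.length, ∑ l ∈ Finset.range w.length,
      ω (v.getD j 0) (w.getD l 0) • wordBracket ω u (rotAt v j ++ rotAt w l)) =
    S1 ω u v w + S2 ω u v w := by
  unfold S1 S2
  simp only [Finset.sum_product]
  rw [← Finset.sum_add_distrib]
  refine Finset.sum_congr rfl fun j hj => ?_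
  rw [← Finset.sum_add_distrib]
  refine Finset.sum_congr rfl fun l hl => ?_
  rw [Finset.mem_range] at hj hl
  rw [split_sum₂, smul_add, Finset.smul_sum, Finset.smul_sum]
  congr 1
  · refine Finset.sum_congr rfl fun i _ => ?_
    rw [Finset.smul_sum, rotAt_length _ _ hj]
    refine Finset.sum_congr rfl fun n _ => ?_
    rw [smul_smul]
  · refine Finset.sum_congr rfl fun i _ => ?_
    rw [Finset.smul_sum, rotAt_length _ _ hl]
    refine Finset.sum_congr rfl fun n _ => ?_
    rw [smul_smul]

lemma smul_comm_pair_mem (c : k) (x y z t : TensorAlgebra k E) :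
    c • (x * (y * z * t)) + (-c) • (z * (t * x * y)) ∈ commSpan k E := by
  have h2 : c • (x * (y * z * t)) + (-c) • (z * (t * x * y)) =
      c • ((x * y) * (z * t)) - c • ((z * t) * (x * y)) := by
    simp only [mul_assoc, neg_smul]; rw [sub_eq_add_neg]
  rw [h2, ← smul_sub]
  exact Submodule.smul_mem _ _ (comm_mem _ _)

lemma pair_step (hskew : ∀ x y : E, ω x y = - ω y x) (u v w : List E)
    {i j l n j' : ℕ} (hj : j < v.length) (hn : n < v.length - 1)
    (hj' : j' < v.length) (hrel : j' = j + n + 1 ∨ j' + v.length = j + n + 1) :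
    (ω (v.getD j 0) (w.getD l 0) * ω (u.getD i 0) ((rotAt v j).getD n 0)) •
      wordProd k (rotAt u i ++
        ((rotAt v j).drop (n + 1) ++ rotAt w l ++ (rotAt v j).take n)) +
    (ω (u.getD i 0) (v.getD j' 0) *
        ω (w.getD l 0) ((rotAt v j').getD (v.length - 2 - n) 0)) •
      wordProd k (rotAt w l ++
        ((rotAt v j').drop (v.length - 2 - n + 1) ++ rotAt u i ++
          (rotAt v j').take (v.length - 2 - n))) ∈ commSpan k E := by
  have hm : v.length - 2 - n < v.length - 1 := by omega
  have hrel' : j = j' + (v.length - 2 - n) + 1 ∨ j + v.length = j' + (v.length - 2 - n) + 1 := by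
    omega
  rw [rot_getD v hj hn hj' hrel, rot_getD v hj' hm hj hrel',
    hskew (w.getD l 0) (v.getD j 0),
    show v.length - 2 - n + 1 = v.length - 1 - n from by omega,
    rot_drop_eq_take v hj hn hj' hrel, rot_take_eq_drop v hj hn hj' hrel,
    mul_neg, mul_comm (ω (u.getD i 0) (v.getD j' 0)) (ω (v.getD j 0) (w.getD l 0))]
  simp only [wordProd_append]
  exact smul_comm_pair_mem _ _ _ _ _

def phiQ (q : ℕ) (x : (ℕ × ℕ) × (ℕ × ℕ)) : (ℕ × ℕ) × (ℕ × ℕ) :=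
  ((x.2.1, if x.1.1 + x.2.2 + 1 < q then x.1.1 + x.2.2 + 1 else x.1.1 + x.2.2 + 1 - q),
    (x.1.2, q - 2 - x.2.2))

def psiQ (q : ℕ) (y : (ℕ × ℕ) × (ℕ × ℕ)) : (ℕ × ℕ) × (ℕ × ℕ) :=
  ((if y.1.2 + y.2.2 + 1 < q then y.1.2 + y.2.2 + 1 else y.1.2 + y.2.2 + 1 - q, y.2.1),
    (y.1.1, q - 2 - y.2.2))

lemma key3 (hskew : ∀ x y : E, ω x y = - ω y x) (u v w : List E) :
    S1 ω u v w + S2 ω w u v ∈ commSpan k E := by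
  have reindex : ∀ (F : (ℕ × ℕ) × (ℕ × ℕ) → TensorAlgebra k E),
      (∑ x ∈ (Finset.range u.length ×ˢ Finset.range v.length) ×ˢ
          (Finset.range w.length ×ˢ Finset.range (v.length - 1)), F x) =
      ∑ x ∈ (Finset.range v.length ×ˢ Finset.range w.length) ×ˢ
          (Finset.range u.length ×ˢ Finset.range (v.length - 1)), F (phiQ v.length x) := by
    intro F
    have h1 : ∀ x ∈ (Finset.range u.length ×ˢ Finset.range v.length) ×ˢ
        (Finset.range w.length ×ˢ Finset.range (v.length - 1)),
        phiQ v.length (psiQ v.length x) = x := by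
      rintro ⟨⟨a, b⟩, c, d⟩ hx
      simp [Finset.mem_product, phiQ, psiQ, Prod.ext_iff] at hx ⊢
      split_ifs <;> omega
    refine Finset.sum_nbij' (psiQ v.length) (phiQ v.length) ?_ ?_ h1 ?_
      (fun a ha => (congrArg F (h1 a ha)).symm) <;>
      rintro ⟨⟨a, b⟩, c, d⟩ hx <;>
      simp [Finset.mem_product, phiQ, psiQ, Prod.ext_iff] at hx ⊢ <;>
      split_ifs <;> omega
  unfold S1 S2
  rw [reindex, ← Finset.sum_add_distrib]
  refine Submodule.sum_mem _ ?_
  rintro ⟨⟨j, l⟩, i, n⟩ hx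
  simp only [Finset.mem_product, Finset.mem_range] at hx
  obtain ⟨⟨hj, hl⟩, hi, hn⟩ := hx
  simp only [phiQ]
  by_cases hc : j + n + 1 < v.length
  · simp only [if_pos hc]
    exact pair_step ω hskew u v w hj hn (by omega) (Or.inl rfl)
  · simp only [if_neg hc]
    exact pair_step ω hskew u v w hj hn (by omega) (Or.inr (by omega))

lemma jacobi_words (hskew : ∀ x y : E, ω x y = - ω y x)
    (Br : TensorAlgebra k E →ₗ[k] TensorAlgebra k E →ₗ[k] TensorAlgebra k E)
    (hBr : ∀ u v : List E, Br (wordProd k u) (wordProd k v) = wordBracket ω u v)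
    (u v w : List E) :
    Br (wordProd k u) (Br (wordProd k v) (wordProd k w)) +
      Br (wordProd k v) (Br (wordProd k w) (wordProd k u)) +
      Br (wordProd k w) (Br (wordProd k u) (wordProd k v)) ∈ commSpan k E := by
  have hT : ∀ a b c : List E, Br (wordProd k a) (Br (wordProd k b) (wordProd k c)) =
      S1 ω a b c + S2 ω a b c := by
    intro a b c
    rw [hBr b c, wordBracket_eq, ← T_eq, map_sum]
    refine Finset.sum_congr rfl fun j _ => ?_
    rw [map_sum]
    refine Finset.sum_congr rfl fun l _ => ?_
    rw [map_smul, hBr]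
  rw [hT, hT, hT]
  have h1 := key3 ω hskew u v w
  have h2 := key3 ω hskew v w u
  have h3 := key3 ω hskew w u v
  have htot := Submodule.add_mem _ (Submodule.add_mem _ h1 h2) h3
  convert htot using 1
  abel


end Aux

theorem ginzburg_thm_2_2_free_case
    (k : Type*) [Field k] [CharZero k]
    (E : Type*) [AddCommGroup E] [Module k E] [FiniteDimensional k E]
    (ω : E →ₗ[k] E →ₗ[k] k)
    (hskew : ∀ x y : E, ω x y = - ω y x)
    (hnondeg : ∀ x : E, (∀ y : E, ω x y = 0) → x = 0)
    -- `Br` is the k-bilinear pairing `{·,·}_ω : TE × TE → TE`, determined by its values on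
    -- homogeneous tensors (and vanishing when either argument lies in E^{⊗0} = k, which is
    -- the case `u = []` resp. `v = []` of the empty sum below):
    (Br : TensorAlgebra k E →ₗ[k] TensorAlgebra k E →ₗ[k] TensorAlgebra k E)
    (hBr : ∀ u v : List E, Br (wordProd k u) (wordProd k v) = wordBracket ω u v) :
    -- `{·,·}_ω` maps [TE,TE] × TE and TE × [TE,TE] into [TE,TE]:
    (∀ f ∈ commSpan k E, ∀ g : TensorAlgebra k E,
        Br f g ∈ commSpan k E ∧ Br g f ∈ commSpan k E) ∧
    -- the induced bracket on TE/[TE,TE] is alternating: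
    (∀ f : TensorAlgebra k E, Br f f ∈ commSpan k E) ∧
    -- the induced bracket on TE/[TE,TE] satisfies the Jacobi identity:
    (∀ f g h : TensorAlgebra k E,
        Br f (Br g h) + Br g (Br h f) + Br h (Br f g) ∈ commSpan k E) := by
  have skew : ∀ f g : TensorAlgebra k E, Br f g + Br g f ∈ commSpan k E := by
    have l1 : ∀ (u : List E) (g : TensorAlgebra k E),
        Br (wordProd k u) g + Br g (wordProd k u) ∈ commSpan k E := by
      intro u g
      have := mem_commSpan_of_words (Br (wordProd k u) + Br.flip (wordProd k u)) ?_ g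
      · simpa using this
      · intro v
        simp only [LinearMap.add_apply, LinearMap.flip_apply]
        rw [hBr, hBr]
        exact key2 ω hskew u v
    intro f g
    have := mem_commSpan_of_words (Br.flip g + Br g) ?_ f
    · simpa using this
    · intro u
      simp only [LinearMap.add_apply, LinearMap.flip_apply]
      exact l1 u g
  -- Br (P (u++v)) = Br (P (v++u)) as linear maps
  have hword : ∀ u' v' : List E,
      Br (wordProd k (u' ++ v')) = Br (wordProd k (v' ++ u')) := by
    intro u' v'
    refine ext_words _ _ fun w => ?_
    rw [hBr, hBr]
    exact key1 ω u' v' w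
  have hA : ∀ a b g : TensorAlgebra k E, Br (a * b) g = Br (b * a) g := by
    intro a
    have ha : a ∈ Submodule.span k
        (Set.range (wordProd k : List E → TensorAlgebra k E)) := by
      rw [span_words]; exact Submodule.mem_top
    refine Submodule.span_induction
      (p := fun a _ => ∀ b g : TensorAlgebra k E, Br (a * b) g = Br (b * a) g)
      ?_ ?_ ?_ ?_ ha
    · rintro _ ⟨u', rfl⟩ b g
      have hb : b ∈ Submodule.span k
          (Set.range (wordProd k : List E → TensorAlgebra k E)) := by
        rw [span_words]; exact Submodule.mem_top
      refine Submodule.span_induction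
        (p := fun b _ => ∀ g : TensorAlgebra k E,
          Br (wordProd k u' * b) g = Br (b * wordProd k u') g) ?_ ?_ ?_ ?_ hb g
      · rintro _ ⟨v', rfl⟩ g
        rw [← wordProd_append, ← wordProd_append]
        exact LinearMap.congr_fun (hword u' v') g
      · intro g; simp
      · intro x y _ _ hx hy g
        rw [mul_add, add_mul, map_add, map_add, LinearMap.add_apply,
          LinearMap.add_apply, hx g, hy g]
      · intro c x _ hx g
        rw [mul_smul_comm, smul_mul_assoc, map_smul, map_smul,
          LinearMap.smul_apply, LinearMap.smul_apply, hx g]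
    · intro b g; simp
    · intro x y _ _ hx hy b g
      rw [add_mul, mul_add, map_add, map_add, LinearMap.add_apply,
        LinearMap.add_apply, hx b g, hy b g]
    · intro c x _ hx b g
      rw [smul_mul_assoc, mul_smul_comm, map_smul, map_smul,
        LinearMap.smul_apply, LinearMap.smul_apply, hx b g]
  have comm0 : ∀ f ∈ commSpan k E, ∀ g : TensorAlgebra k E, Br f g = 0 := by
    intro f hf
    refine Submodule.span_induction
      (p := fun f _ => ∀ g : TensorAlgebra k E, Br f g = 0) ?_ ?_ ?_ ?_ hf
    · rintro _ ⟨a, b, rfl⟩ g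
      rw [map_sub, LinearMap.sub_apply, hA a b g, sub_self]
    · intro g; simp
    · intro x y _ _ hx hy g
      rw [map_add, LinearMap.add_apply, hx g, hy g, add_zero]
    · intro c x _ hx g
      rw [map_smul, LinearMap.smul_apply, hx g, smul_zero]
  refine ⟨fun f hf g => ⟨?_, ?_⟩, ?_, ?_⟩
  · rw [comm0 f hf g]; exact Submodule.zero_mem _
  · have h1 := skew f g
    have h2 : Br f g = 0 := comm0 f hf g
    rw [h2, zero_add] at h1
    exact h1
  · intro f
    have h1 := skew f f
    rw [← two_smul k] at h1
    have h2 : Br f f = (2 : k)⁻¹ • ((2 : k) • Br f f) := by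
      rw [smul_smul, inv_mul_cancel₀ (two_ne_zero), one_smul]
    rw [h2]
    exact Submodule.smul_mem _ _ h1
  · -- Jacobi
    have J3 : ∀ (u v : List E) (h : TensorAlgebra k E),
        Br (wordProd k u) (Br (wordProd k v) h) +
          Br (wordProd k v) (Br h (wordProd k u)) +
          Br h (Br (wordProd k u) (wordProd k v)) ∈ commSpan k E := by
      intro u v h
      have := mem_commSpan_of_words
        ((Br (wordProd k u)) ∘ₗ (Br (wordProd k v)) +
          ((Br (wordProd k v)) ∘ₗ (Br.flip (wordProd k u)) +
            Br.flip (Br (wordProd k u) (wordProd k v)))) ?_ h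
      · simpa [add_assoc] using this
      · intro w
        simpa [add_assoc] using jacobi_words ω hskew Br hBr u v w
    have J2 : ∀ (u : List E) (g h : TensorAlgebra k E),
        Br (wordProd k u) (Br g h) + Br g (Br h (wordProd k u)) +
          Br h (Br (wordProd k u) g) ∈ commSpan k E := by
      intro u g h
      have := mem_commSpan_of_words
        ((Br (wordProd k u)) ∘ₗ (Br.flip h) +
          (Br.flip (Br h (wordProd k u)) + (Br h) ∘ₗ (Br (wordProd k u)))) ?_ g
      · simpa [add_assoc] using this
      · intro v
        simpa [add_assoc] using J3 u v h
    intro f g h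
    have := mem_commSpan_of_words
      (Br.flip (Br g h) + ((Br g) ∘ₗ (Br h) + (Br h) ∘ₗ (Br.flip g))) ?_ f
    · simpa [add_assoc] using this
    · intro u
      simpa [add_assoc] using J2 u g h
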